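/- Let μ ∈ [0, 1/2], h ∈ ℝ, m₀ = √(2(1−μ)), and let F_μ be the vector field of the McGehee-regularized collision problem in coordinates (s, θ, α) restricted to the energy manifold. Then for every θ̄ ∈ ℝ the points S⁺_θ̄ = (0, θ̄, π/2) and S⁻_θ̄ = (0, θ̄, −π/2) are equilibrium points of F_μ, and the Jacobian matrices are DF_μ(S^±_θ̄) = [[±m₀/2, 0, 0], [0, 0, ∓m₀], [0, 0, ∓m₀/2]] (rows and columns ordered (s, θ, α)); in particular the eigenvalues of DF_μ(S^±_θ̄) are ±m₀/2, 0, and ∓m₀/2, so the circles of equilibria S^± = {S^±_θ̄ : θ̄ ∈ 𝕋} are normally hyperbolic. -/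

import Mathlib

open Real Filter
open scoped Topology

/-- The function `ρ(s,θ)` determined by the energy relation on the energy-`h` manifold of the
McGehee-regularized collision problem. -/
noncomputable def rhoFun (μ h s θ : ℝ) : ℝ :=
  2 * s ^ 2 * h + s ^ 6 -
    2 * μ * s ^ 2 *
      (-μ / 2 + s ^ 2 * Real.cos θ -
        (1 + s ^ 4 - 2 * s ^ 2 * Real.cos θ) ^ (-(1 / 2) : ℝ))

/-- Partial derivative `∂_s ρ`. -/
noncomputable def rhoS (μ h s θ : ℝ) : ℝ := deriv (fun s' => rhoFun μ h s' θ) s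

/-- Partial derivative `∂_θ ρ`. -/
noncomputable def rhoTheta (μ h s θ : ℝ) : ℝ := deriv (fun θ' => rhoFun μ h s θ') θ

/-- Abbreviation for `√(2(1-μ)+ρ(s,θ))`. -/
noncomputable def mFun (μ h s θ : ℝ) : ℝ := Real.sqrt (2 * (1 - μ) + rhoFun μ h s θ)

/-- The vector field of the McGehee-regularized collision problem in coordinates
`(s,θ,α)` restricted to the energy-`h` manifold. -/
noncomputable def Fvec (μ h : ℝ) (x : ℝ × ℝ × ℝ) : ℝ × ℝ × ℝ :=
  (x.1 / 2 * mFun μ h x.1 x.2.1 * Real.sin x.2.2,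
   mFun μ h x.1 x.2.1 * Real.cos x.2.2,
   (rhoS μ h x.1 x.2.1 * (x.1 / 2 * mFun μ h x.1 x.2.1 * Real.sin x.2.2)
      + rhoTheta μ h x.1 x.2.1 * (mFun μ h x.1 x.2.1 * Real.cos x.2.2))
     / (2 * (2 * (1 - μ) + rhoFun μ h x.1 x.2.1) * Real.tan x.2.2)
   + mFun μ h x.1 x.2.1 / 2 * Real.cos x.2.2 + 2 * x.1 ^ 3
   - μ * x.1 ^ 4 * Real.sin x.2.1 *
       (1 - (1 + x.1 ^ 4 - 2 * x.1 ^ 2 * Real.cos x.2.1) ^ (-(3 / 2) : ℝ))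
     / (mFun μ h x.1 x.2.1 * Real.sin x.2.2))

/-- The linear map `(v₁,v₂,v₃) ↦ (a v₁, b v₃, c v₃)`, i.e. the matrix
`[[a,0,0],[0,0,b],[0,0,c]]` in coordinates `(s,θ,α)`. -/
noncomputable def Lmat (a b c : ℝ) : (ℝ × ℝ × ℝ) →L[ℝ] ℝ × ℝ × ℝ :=
  (a • ContinuousLinearMap.fst ℝ ℝ (ℝ × ℝ)).prod
    ((b • ((ContinuousLinearMap.snd ℝ ℝ ℝ).comp (ContinuousLinearMap.snd ℝ ℝ (ℝ × ℝ)))).prod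
      (c • ((ContinuousLinearMap.snd ℝ ℝ ℝ).comp (ContinuousLinearMap.snd ℝ ℝ (ℝ × ℝ)))))

/-! ### Auxiliary closed forms for the partial derivatives of `ρ`. -/

/-- Closed form of `∂_s ρ`. -/
noncomputable def Pfun (μ h s θ : ℝ) : ℝ :=
  4*s*h + 6*s^5
    - 4*μ*s*(-μ/2 + s^2*Real.cos θ - (1 + s^4 - 2*s^2*Real.cos θ)^(-(1/2) : ℝ))
    - 2*μ*s^2*(2*s*Real.cos θ
        + (2*s^3 - 2*s*Real.cos θ)*(1 + s^4 - 2*s^2*Real.cos θ)^(-(3/2) : ℝ))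

/-- Closed form of `∂_θ ρ`. -/
noncomputable def Qfun (μ s θ : ℝ) : ℝ :=
  2*μ*s^2*(s^2*Real.sin θ - s^2*Real.sin θ*(1 + s^4 - 2*s^2*Real.cos θ)^(-(3/2) : ℝ))

lemma rho_s_hasDerivAt (μ h θ s : ℝ) (hg : 1 + s^4 - 2*s^2*Real.cos θ ≠ 0) :
    HasDerivAt (fun s' => rhoFun μ h s' θ) (Pfun μ h s θ) s := by
  have h2 : HasDerivAt (fun s' : ℝ => s'^2) (2*s) s := by simpa using hasDerivAt_pow 2 s
  have h4 : HasDerivAt (fun s' : ℝ => s'^4) (4*s^3) s := by simpa using hasDerivAt_pow 4 s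
  have h6 : HasDerivAt (fun s' : ℝ => s'^6) (6*s^5) s := by simpa using hasDerivAt_pow 6 s
  have hg4 : HasDerivAt (fun s' : ℝ => 1 + s'^4 - 2*s'^2*Real.cos θ)
      (4*s^3 - 2*(2*s)*Real.cos θ) s := by
    have := ((hasDerivAt_const s (1:ℝ)).add h4).sub ((h2.const_mul 2).mul_const (Real.cos θ))
    refine this.congr_deriv ?_
    ring
  have hroot : HasDerivAt (fun s' : ℝ => (1 + s'^4 - 2*s'^2*Real.cos θ)^(-(1/2) : ℝ))
      ((4*s^3 - 2*(2*s)*Real.cos θ) * (-(1/2)) * (1 + s^4 - 2*s^2*Real.cos θ)^((-(1/2):ℝ)-1)) s :=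
    hg4.rpow_const (Or.inl hg)
  have hφ : HasDerivAt (fun s' : ℝ => -μ/2 + s'^2*Real.cos θ
        - (1 + s'^4 - 2*s'^2*Real.cos θ)^(-(1/2) : ℝ))
      (2*s*Real.cos θ - (4*s^3 - 2*(2*s)*Real.cos θ) * (-(1/2))
        * (1 + s^4 - 2*s^2*Real.cos θ)^((-(1/2):ℝ)-1)) s := by
    have := ((hasDerivAt_const s (-μ/2)).add (h2.mul_const (Real.cos θ))).sub hroot
    simp at this ⊢
    exact this
  have hA : HasDerivAt (fun s' : ℝ => 2*s'^2*h) (2*(2*s)*h) s := (h2.const_mul 2).mul_const h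
  have hB : HasDerivAt (fun s' : ℝ => 2*μ*s'^2) (2*μ*(2*s)) s := h2.const_mul (2*μ)
  have total := (hA.add h6).sub (hB.mul hφ)
  simp only [rhoFun]
  refine total.congr_deriv ?_
  simp only [Pfun]
  rw [show ((-(1/2):ℝ)-1) = (-(3/2):ℝ) by norm_num]
  ring

lemma rho_t_hasDerivAt (μ h s θ : ℝ) (hg : 1 + s^4 - 2*s^2*Real.cos θ ≠ 0) :
    HasDerivAt (fun θ' => rhoFun μ h s θ') (Qfun μ s θ) θ := by
  have hgθ : HasDerivAt (fun θ' : ℝ => 1 + s^4 - 2*s^2*Real.cos θ')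
      (-(2*s^2*(-Real.sin θ))) θ := by
    have := (hasDerivAt_const θ (1+s^4)).sub ((Real.hasDerivAt_cos θ).const_mul (2*s^2))
    simp at this ⊢
    exact this
  have hroot : HasDerivAt (fun θ' : ℝ => (1 + s^4 - 2*s^2*Real.cos θ')^(-(1/2) : ℝ))
      ((-(2*s^2*(-Real.sin θ))) * (-(1/2)) * (1 + s^4 - 2*s^2*Real.cos θ)^((-(1/2):ℝ)-1)) θ :=
    hgθ.rpow_const (Or.inl hg)
  have hφ : HasDerivAt (fun θ' : ℝ => -μ/2 + s^2*Real.cos θ'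
        - (1 + s^4 - 2*s^2*Real.cos θ')^(-(1/2) : ℝ))
      (s^2*(-Real.sin θ) - (-(2*s^2*(-Real.sin θ))) * (-(1/2))
        * (1 + s^4 - 2*s^2*Real.cos θ)^((-(1/2):ℝ)-1)) θ := by
    have := ((hasDerivAt_const θ (-μ/2)).add
      ((Real.hasDerivAt_cos θ).const_mul (s^2))).sub hroot
    simp at this ⊢
    exact this
  have total := (hasDerivAt_const θ (2*s^2*h + s^6)).sub (hφ.const_mul (2*μ*s^2))
  simp only [rhoFun]
  refine total.congr_deriv ?_
  simp only [Qfun]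
  rw [show ((-(1/2):ℝ)-1) = (-(3/2):ℝ) by norm_num]
  ring

lemma Pfun_zero (μ h θ : ℝ) : Pfun μ h 0 θ = 0 := by simp [Pfun]

lemma Qfun_zero (μ θ : ℝ) : Qfun μ 0 θ = 0 := by simp [Qfun]

lemma rhoFun_zero (μ h θ : ℝ) : rhoFun μ h 0 θ = 0 := by simp [rhoFun]

lemma rhoS_zero (μ h θ : ℝ) : rhoS μ h 0 θ = 0 := by
  rw [rhoS, (rho_s_hasDerivAt μ h θ 0 (by norm_num)).deriv, Pfun_zero]

lemma rhoTheta_zero (μ h θ : ℝ) : rhoTheta μ h 0 θ = 0 := by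
  rw [rhoTheta, (rho_t_hasDerivAt μ h 0 θ (by norm_num)).deriv, Qfun_zero]

/-! ### Equilibria. -/

lemma Fvec_eq_zero (μ h θb αv : ℝ) (hcos : Real.cos αv = 0) :
    Fvec μ h (0, θb, αv) = 0 := by
  norm_num [Fvec, hcos, Prod.ext_iff]

/-! ### The Jacobian at the equilibria. -/

set_option maxHeartbeats 2000000 in
lemma key_jacobian (μ h θb αv σ a b c : ℝ) (hKpos : 0 < 2*(1-μ))
    (hsin : Real.sin αv = σ) (hcos : Real.cos αv = 0) (hσ : σ ≠ 0)
    (ha : a = σ * Real.sqrt (2*(1-μ)) / 2) (hb : b = -(σ * Real.sqrt (2*(1-μ))))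
    (hc : c = -(σ * Real.sqrt (2*(1-μ)) / 2)) :
    HasFDerivAt (Fvec μ h) (Lmat a b c) ((0:ℝ), θb, αv) := by
  set p : ℝ × ℝ × ℝ := ((0:ℝ), θb, αv) with hp
  set Ls : (ℝ × ℝ × ℝ) →L[ℝ] ℝ := ContinuousLinearMap.fst ℝ ℝ (ℝ × ℝ) with hLs
  set Lθ : (ℝ × ℝ × ℝ) →L[ℝ] ℝ :=
    (ContinuousLinearMap.fst ℝ ℝ ℝ).comp (ContinuousLinearMap.snd ℝ ℝ (ℝ × ℝ)) with hLθ
  set Lα : (ℝ × ℝ × ℝ) →L[ℝ] ℝ :=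
    (ContinuousLinearMap.snd ℝ ℝ ℝ).comp (ContinuousLinearMap.snd ℝ ℝ (ℝ × ℝ)) with hLα
  have hS : HasFDerivAt (fun x : ℝ × ℝ × ℝ => x.1) Ls p := hasFDerivAt_fst
  have hΘ : HasFDerivAt (fun x : ℝ × ℝ × ℝ => x.2.1) Lθ p :=
    hasFDerivAt_fst.comp p hasFDerivAt_snd
  have hAl : HasFDerivAt (fun x : ℝ × ℝ × ℝ => x.2.2) Lα p :=
    hasFDerivAt_snd.comp p hasFDerivAt_snd
  have hcosθ : HasFDerivAt (fun x : ℝ × ℝ × ℝ => Real.cos x.2.1) ((-Real.sin θb) • Lθ) p :=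
    (Real.hasDerivAt_cos θb).comp_hasFDerivAt (f := fun x : ℝ × ℝ × ℝ => x.2.1) p hΘ
  have hsinθ : HasFDerivAt (fun x : ℝ × ℝ × ℝ => Real.sin x.2.1) ((Real.cos θb) • Lθ) p :=
    (Real.hasDerivAt_sin θb).comp_hasFDerivAt (f := fun x : ℝ × ℝ × ℝ => x.2.1) p hΘ
  have hcosα : HasFDerivAt (fun x : ℝ × ℝ × ℝ => Real.cos x.2.2) ((-Real.sin αv) • Lα) p :=
    (Real.hasDerivAt_cos αv).comp_hasFDerivAt (f := fun x : ℝ × ℝ × ℝ => x.2.2) p hAl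
  have hsinα : HasFDerivAt (fun x : ℝ × ℝ × ℝ => Real.sin x.2.2) ((Real.cos αv) • Lα) p :=
    (Real.hasDerivAt_sin αv).comp_hasFDerivAt (f := fun x : ℝ × ℝ × ℝ => x.2.2) p hAl
  have hx2 : HasFDerivAt (fun x : ℝ × ℝ × ℝ => x.1^2) (0 : (ℝ × ℝ × ℝ) →L[ℝ] ℝ) p := by
    have := (hasDerivAt_pow 2 (0:ℝ)).comp_hasFDerivAt p hS
    simp at this ⊢
    exact this
  have hx3 : HasFDerivAt (fun x : ℝ × ℝ × ℝ => x.1^3) (0 : (ℝ × ℝ × ℝ) →L[ℝ] ℝ) p := by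
    have := (hasDerivAt_pow 3 (0:ℝ)).comp_hasFDerivAt p hS
    simp at this ⊢
    exact this
  have hx4 : HasFDerivAt (fun x : ℝ × ℝ × ℝ => x.1^4) (0 : (ℝ × ℝ × ℝ) →L[ℝ] ℝ) p := by
    have := (hasDerivAt_pow 4 (0:ℝ)).comp_hasFDerivAt p hS
    simp at this ⊢
    exact this
  have hx5 : HasFDerivAt (fun x : ℝ × ℝ × ℝ => x.1^5) (0 : (ℝ × ℝ × ℝ) →L[ℝ] ℝ) p := by
    have := (hasDerivAt_pow 5 (0:ℝ)).comp_hasFDerivAt p hS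
    simp at this ⊢
    exact this
  have hx6 : HasFDerivAt (fun x : ℝ × ℝ × ℝ => x.1^6) (0 : (ℝ × ℝ × ℝ) →L[ℝ] ℝ) p := by
    have := (hasDerivAt_pow 6 (0:ℝ)).comp_hasFDerivAt p hS
    simp at this ⊢
    exact this
  -- the auxiliary function g
  have hG : HasFDerivAt (fun x : ℝ × ℝ × ℝ => 1 + x.1^4 - 2*x.1^2*Real.cos x.2.1)
      (0 : (ℝ × ℝ × ℝ) →L[ℝ] ℝ) p := by
    have := ((hasFDerivAt_const (1:ℝ) p).add hx4).sub ((hx2.const_mul 2).mul hcosθ)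
    refine this.congr_fderiv ?_
    refine ContinuousLinearMap.ext fun v => ?_
    simp [hp]
  have hGne : (fun x : ℝ × ℝ × ℝ => 1 + x.1^4 - 2*x.1^2*Real.cos x.2.1) p ≠ 0 := by
    norm_num [hp]
  have hG12 : HasFDerivAt
      (fun x : ℝ × ℝ × ℝ => (1 + x.1^4 - 2*x.1^2*Real.cos x.2.1) ^ (-(1/2) : ℝ))
      (0 : (ℝ × ℝ × ℝ) →L[ℝ] ℝ) p := by
    simpa using hG.rpow_const (Or.inl hGne)
  have hG32 : HasFDerivAt
      (fun x : ℝ × ℝ × ℝ => (1 + x.1^4 - 2*x.1^2*Real.cos x.2.1) ^ (-(3/2) : ℝ))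
      (0 : (ℝ × ℝ × ℝ) →L[ℝ] ℝ) p := by
    simpa using hG.rpow_const (Or.inl hGne)
  -- derivative of ρ
  have hρ : HasFDerivAt (fun x : ℝ × ℝ × ℝ => rhoFun μ h x.1 x.2.1)
      (0 : (ℝ × ℝ × ℝ) →L[ℝ] ℝ) p := by
    simp only [rhoFun]
    have hφ := ((hasFDerivAt_const (-μ/2) p).add (hx2.mul hcosθ)).sub hG12
    have := (((hx2.const_mul 2).mul_const h).add hx6).sub ((hx2.const_mul (2*μ)).mul hφ)
    refine this.congr_fderiv ?_
    refine ContinuousLinearMap.ext fun v => ?_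
    simp [hp]
  have hKfd : HasFDerivAt (fun x : ℝ × ℝ × ℝ => 2*(1-μ) + rhoFun μ h x.1 x.2.1)
      (0 : (ℝ × ℝ × ℝ) →L[ℝ] ℝ) p := by
    have := (hasFDerivAt_const (2*(1-μ)) p).add hρ
    exact this.congr_fderiv (by simp)
  have hKne : (fun x : ℝ × ℝ × ℝ => 2*(1-μ) + rhoFun μ h x.1 x.2.1) p ≠ 0 := by
    simp only [hp, rhoFun_zero]
    linarith
  have hMfd : HasFDerivAt (fun x : ℝ × ℝ × ℝ => mFun μ h x.1 x.2.1)
      (0 : (ℝ × ℝ × ℝ) →L[ℝ] ℝ) p := by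
    simp only [mFun]
    simpa using hKfd.sqrt hKne
  have hMval : mFun μ h 0 θb = Real.sqrt (2*(1-μ)) := by
    simp [mFun, rhoFun_zero]
  have hMpos : 0 < Real.sqrt (2*(1-μ)) := Real.sqrt_pos.mpr hKpos
  -- differentiability of the partial derivatives of ρ
  have hopen : ∀ᶠ x : ℝ × ℝ × ℝ in 𝓝 p, (0:ℝ) < 1 + x.1^4 - 2*x.1^2*Real.cos x.2.1 := by
    have hc0 : ContinuousAt (fun x : ℝ × ℝ × ℝ => 1 + x.1^4 - 2*x.1^2*Real.cos x.2.1) p :=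
      hG.differentiableAt.continuousAt
    exact hc0.eventually (eventually_gt_nhds (by norm_num [hp]))
  have hevS : (fun x : ℝ × ℝ × ℝ => rhoS μ h x.1 x.2.1)
      =ᶠ[𝓝 p] (fun x => Pfun μ h x.1 x.2.1) := by
    filter_upwards [hopen] with x hx
    rw [rhoS]
    exact (rho_s_hasDerivAt μ h x.2.1 x.1 (ne_of_gt hx)).deriv
  have hevT : (fun x : ℝ × ℝ × ℝ => rhoTheta μ h x.1 x.2.1)
      =ᶠ[𝓝 p] (fun x => Qfun μ x.1 x.2.1) := by
    filter_upwards [hopen] with x hx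
    rw [rhoTheta]
    exact (rho_t_hasDerivAt μ h x.1 x.2.1 (ne_of_gt hx)).deriv
  have d1 : DifferentiableAt ℝ (fun x : ℝ × ℝ × ℝ => x.1) p := hS.differentiableAt
  have dcθ := hcosθ.differentiableAt
  have dsθ := hsinθ.differentiableAt
  have d12 := hG12.differentiableAt
  have d32 := hG32.differentiableAt
  have dx2 := hx2.differentiableAt
  have dx3 := hx3.differentiableAt
  have dx5 := hx5.differentiableAt
  have hPdiff : DifferentiableAt ℝ (fun x : ℝ × ℝ × ℝ => Pfun μ h x.1 x.2.1) p := by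
    simp only [Pfun]
    exact ((((d1.const_mul 4).mul_const h).add (dx5.const_mul 6)).sub
      ((d1.const_mul (4*μ)).mul
        (((differentiableAt_const (-μ/2)).add (dx2.mul dcθ)).sub d12))).sub
      ((dx2.const_mul (2*μ)).mul
        (((d1.const_mul 2).mul dcθ).add
          (((dx3.const_mul 2).sub ((d1.const_mul 2).mul dcθ)).mul d32)))
  have hQdiff : DifferentiableAt ℝ (fun x : ℝ × ℝ × ℝ => Qfun μ x.1 x.2.1) p := by
    simp only [Qfun]
    exact (dx2.const_mul (2*μ)).mul ((dx2.mul dsθ).sub ((dx2.mul dsθ).mul d32))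
  have hrsd : DifferentiableAt ℝ (fun x : ℝ × ℝ × ℝ => rhoS μ h x.1 x.2.1) p :=
    hevS.differentiableAt_iff.mpr hPdiff
  have hrtd : DifferentiableAt ℝ (fun x : ℝ × ℝ × ℝ => rhoTheta μ h x.1 x.2.1) p :=
    hevT.differentiableAt_iff.mpr hQdiff
  obtain ⟨LS, hLS⟩ := hrsd
  obtain ⟨LT, hLT⟩ := hrtd
  -- first component
  have hhalf : HasFDerivAt (fun x : ℝ × ℝ × ℝ => x.1 / 2) (((1:ℝ)/2) • Ls) p := by
    have := ((hasDerivAt_id (0:ℝ)).div_const 2).comp_hasFDerivAt p hS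
    simp at this ⊢
    exact this
  have h1 : HasFDerivAt
      (fun x : ℝ × ℝ × ℝ => x.1 / 2 * mFun μ h x.1 x.2.1 * Real.sin x.2.2) (a • Ls) p := by
    have := (hhalf.mul hMfd).mul hsinα
    refine this.congr_fderiv ?_
    refine ContinuousLinearMap.ext fun v => ?_
    simp [hp, hMval, hsin, hcos, ha]
    ring
  -- second component
  have h2 : HasFDerivAt
      (fun x : ℝ × ℝ × ℝ => mFun μ h x.1 x.2.1 * Real.cos x.2.2) (b • Lα) p := by
    have := hMfd.mul hcosα
    refine this.congr_fderiv ?_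
    refine ContinuousLinearMap.ext fun v => ?_
    simp [hp, hMval, hsin, hcos, hb]
    ring
  -- third component, piece by piece
  have hDen : HasFDerivAt
      (fun x : ℝ × ℝ × ℝ => 2*(2*(1-μ) + rhoFun μ h x.1 x.2.1) * Real.sin x.2.2)
      (0 : (ℝ × ℝ × ℝ) →L[ℝ] ℝ) p := by
    have := (hKfd.const_mul 2).mul hsinα
    refine this.congr_fderiv ?_
    refine ContinuousLinearMap.ext fun v => ?_
    simp [hp, hcos, rhoFun_zero]
  have hDenNe : (fun x : ℝ × ℝ × ℝ => 2*(2*(1-μ) + rhoFun μ h x.1 x.2.1) * Real.sin x.2.2) p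
      ≠ 0 := by
    simp only [hp, rhoFun_zero, hsin]
    have : (2:ℝ)*(2*(1-μ) + 0) ≠ 0 := by linarith
    exact mul_ne_zero this hσ
  have hDenInv : HasFDerivAt
      (fun x : ℝ × ℝ × ℝ => (2*(2*(1-μ) + rhoFun μ h x.1 x.2.1) * Real.sin x.2.2)⁻¹)
      (0 : (ℝ × ℝ × ℝ) →L[ℝ] ℝ) p := by
    have := (hasDerivAt_inv hDenNe).comp_hasFDerivAt p hDen
    refine this.congr_fderiv ?_
    refine ContinuousLinearMap.ext fun v => ?_
    simp
  have hNum := (hLS.mul h1).add (hLT.mul h2)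
  have hT1 : HasFDerivAt
      (fun x : ℝ × ℝ × ℝ =>
        (rhoS μ h x.1 x.2.1 * (x.1 / 2 * mFun μ h x.1 x.2.1 * Real.sin x.2.2)
          + rhoTheta μ h x.1 x.2.1 * (mFun μ h x.1 x.2.1 * Real.cos x.2.2))
        * Real.cos x.2.2 / (2*(2*(1-μ) + rhoFun μ h x.1 x.2.1) * Real.sin x.2.2))
      (0 : (ℝ × ℝ × ℝ) →L[ℝ] ℝ) p := by
    have hrw : (fun x : ℝ × ℝ × ℝ =>
        (rhoS μ h x.1 x.2.1 * (x.1 / 2 * mFun μ h x.1 x.2.1 * Real.sin x.2.2)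
          + rhoTheta μ h x.1 x.2.1 * (mFun μ h x.1 x.2.1 * Real.cos x.2.2))
        * Real.cos x.2.2 / (2*(2*(1-μ) + rhoFun μ h x.1 x.2.1) * Real.sin x.2.2))
        = (fun x : ℝ × ℝ × ℝ =>
        (rhoS μ h x.1 x.2.1 * (x.1 / 2 * mFun μ h x.1 x.2.1 * Real.sin x.2.2)
          + rhoTheta μ h x.1 x.2.1 * (mFun μ h x.1 x.2.1 * Real.cos x.2.2))
        * Real.cos x.2.2 * (2*(2*(1-μ) + rhoFun μ h x.1 x.2.1) * Real.sin x.2.2)⁻¹) :=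
      funext fun x => div_eq_mul_inv _ _
    rw [hrw]
    have := (hNum.mul hcosα).mul hDenInv
    refine this.congr_fderiv ?_
    refine ContinuousLinearMap.ext fun v => ?_
    simp [hp, hcos, hsin, hMval, rhoFun_zero, rhoS_zero, rhoTheta_zero]
  have hT2 : HasFDerivAt
      (fun x : ℝ × ℝ × ℝ => mFun μ h x.1 x.2.1 / 2 * Real.cos x.2.2) (c • Lα) p := by
    have hMhalf : HasFDerivAt (fun x : ℝ × ℝ × ℝ => mFun μ h x.1 x.2.1 / 2)
        (0 : (ℝ × ℝ × ℝ) →L[ℝ] ℝ) p := by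
      have hrw : (fun x : ℝ × ℝ × ℝ => mFun μ h x.1 x.2.1 / 2)
          = (fun x : ℝ × ℝ × ℝ => mFun μ h x.1 x.2.1 * (2:ℝ)⁻¹) :=
        funext fun x => div_eq_mul_inv _ _
      rw [hrw]
      simpa using hMfd.mul_const (2:ℝ)⁻¹
    have := hMhalf.mul hcosα
    refine this.congr_fderiv ?_
    refine ContinuousLinearMap.ext fun v => ?_
    simp [hp, hMval, hsin, hcos, hc]
    ring
  have hT3 : HasFDerivAt (fun x : ℝ × ℝ × ℝ => 2*x.1^3)
      (0 : (ℝ × ℝ × ℝ) →L[ℝ] ℝ) p := by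
    simpa using hx3.const_mul 2
  have hDen4Ne : (fun x : ℝ × ℝ × ℝ => mFun μ h x.1 x.2.1 * Real.sin x.2.2) p ≠ 0 := by
    simp only [hp, hMval, hsin]
    exact mul_ne_zero (ne_of_gt hMpos) hσ
  have hDen4 := hMfd.mul hsinα
  have hDen4Inv : HasFDerivAt
      (fun x : ℝ × ℝ × ℝ => (mFun μ h x.1 x.2.1 * Real.sin x.2.2)⁻¹)
      (0 : (ℝ × ℝ × ℝ) →L[ℝ] ℝ) p := by
    have := (hasDerivAt_inv hDen4Ne).comp_hasFDerivAt p hDen4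
    refine this.congr_fderiv ?_
    refine ContinuousLinearMap.ext fun v => ?_
    simp [hp, hcos, hMval]
  have hT4 : HasFDerivAt
      (fun x : ℝ × ℝ × ℝ =>
        μ * x.1^4 * Real.sin x.2.1 * (1 - (1 + x.1^4 - 2*x.1^2*Real.cos x.2.1) ^ (-(3/2) : ℝ))
          / (mFun μ h x.1 x.2.1 * Real.sin x.2.2))
      (0 : (ℝ × ℝ × ℝ) →L[ℝ] ℝ) p := by
    have hrw : (fun x : ℝ × ℝ × ℝ =>
        μ * x.1^4 * Real.sin x.2.1 * (1 - (1 + x.1^4 - 2*x.1^2*Real.cos x.2.1) ^ (-(3/2) : ℝ))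
          / (mFun μ h x.1 x.2.1 * Real.sin x.2.2))
        = (fun x : ℝ × ℝ × ℝ =>
        μ * x.1^4 * Real.sin x.2.1 * (1 - (1 + x.1^4 - 2*x.1^2*Real.cos x.2.1) ^ (-(3/2) : ℝ))
          * (mFun μ h x.1 x.2.1 * Real.sin x.2.2)⁻¹) :=
      funext fun x => div_eq_mul_inv _ _
    rw [hrw]
    have hnum4 := (((hx4.const_mul μ).mul hsinθ).mul ((hasFDerivAt_const (1:ℝ) p).sub hG32))
    have := hnum4.mul hDen4Inv
    refine this.congr_fderiv ?_
    refine ContinuousLinearMap.ext fun v => ?_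
    simp [hp]
  have h3 : HasFDerivAt
      (fun x : ℝ × ℝ × ℝ =>
        (rhoS μ h x.1 x.2.1 * (x.1 / 2 * mFun μ h x.1 x.2.1 * Real.sin x.2.2)
          + rhoTheta μ h x.1 x.2.1 * (mFun μ h x.1 x.2.1 * Real.cos x.2.2))
        * Real.cos x.2.2 / (2*(2*(1-μ) + rhoFun μ h x.1 x.2.1) * Real.sin x.2.2)
        + mFun μ h x.1 x.2.1 / 2 * Real.cos x.2.2 + 2*x.1^3
        - μ * x.1^4 * Real.sin x.2.1
            * (1 - (1 + x.1^4 - 2*x.1^2*Real.cos x.2.1) ^ (-(3/2) : ℝ))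
          / (mFun μ h x.1 x.2.1 * Real.sin x.2.2)) (c • Lα) p := by
    have := ((hT1.add hT2).add hT3).sub hT4
    refine this.congr_fderiv ?_
    refine ContinuousLinearMap.ext fun v => ?_
    simp
  -- the third component of Fvec agrees with the rewritten form
  have h3' : HasFDerivAt
      (fun x : ℝ × ℝ × ℝ =>
        (rhoS μ h x.1 x.2.1 * (x.1 / 2 * mFun μ h x.1 x.2.1 * Real.sin x.2.2)
          + rhoTheta μ h x.1 x.2.1 * (mFun μ h x.1 x.2.1 * Real.cos x.2.2))
        / (2 * (2 * (1 - μ) + rhoFun μ h x.1 x.2.1) * Real.tan x.2.2)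
        + mFun μ h x.1 x.2.1 / 2 * Real.cos x.2.2 + 2 * x.1 ^ 3
        - μ * x.1 ^ 4 * Real.sin x.2.1 *
            (1 - (1 + x.1 ^ 4 - 2 * x.1 ^ 2 * Real.cos x.2.1) ^ (-(3 / 2) : ℝ))
          / (mFun μ h x.1 x.2.1 * Real.sin x.2.2)) (c • Lα) p := by
    have hid : (fun x : ℝ × ℝ × ℝ =>
        (rhoS μ h x.1 x.2.1 * (x.1 / 2 * mFun μ h x.1 x.2.1 * Real.sin x.2.2)
          + rhoTheta μ h x.1 x.2.1 * (mFun μ h x.1 x.2.1 * Real.cos x.2.2))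
        / (2 * (2 * (1 - μ) + rhoFun μ h x.1 x.2.1) * Real.tan x.2.2)
        + mFun μ h x.1 x.2.1 / 2 * Real.cos x.2.2 + 2 * x.1 ^ 3
        - μ * x.1 ^ 4 * Real.sin x.2.1 *
            (1 - (1 + x.1 ^ 4 - 2 * x.1 ^ 2 * Real.cos x.2.1) ^ (-(3 / 2) : ℝ))
          / (mFun μ h x.1 x.2.1 * Real.sin x.2.2))
        = (fun x : ℝ × ℝ × ℝ =>
        (rhoS μ h x.1 x.2.1 * (x.1 / 2 * mFun μ h x.1 x.2.1 * Real.sin x.2.2)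
          + rhoTheta μ h x.1 x.2.1 * (mFun μ h x.1 x.2.1 * Real.cos x.2.2))
        * Real.cos x.2.2 / (2*(2*(1-μ) + rhoFun μ h x.1 x.2.1) * Real.sin x.2.2)
        + mFun μ h x.1 x.2.1 / 2 * Real.cos x.2.2 + 2*x.1^3
        - μ * x.1^4 * Real.sin x.2.1
            * (1 - (1 + x.1^4 - 2*x.1^2*Real.cos x.2.1) ^ (-(3/2) : ℝ))
          / (mFun μ h x.1 x.2.1 * Real.sin x.2.2)) := by
      funext x
      rw [Real.tan_eq_sin_div_cos, ← mul_div_assoc, div_div_eq_mul_div]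
    rw [hid]
    exact h3
  exact HasFDerivAt.prodMk h1 (HasFDerivAt.prodMk h2 h3')

/-! ### Eigenvalues of `Lmat`. -/

lemma Lmat_apply (a b c : ℝ) (v : ℝ × ℝ × ℝ) :
    Lmat a b c v = (a * v.1, b * v.2.2, c * v.2.2) := by
  simp [Lmat]

lemma eig_fst (a b c : ℝ) :
    Module.End.HasEigenvalue (Lmat a b c).toLinearMap a := by
  apply Module.End.hasEigenvalue_of_hasEigenvector (x := ((1:ℝ), (0:ℝ), (0:ℝ)))
  refine ⟨Module.End.mem_eigenspace_iff.mpr ?_, by norm_num [Prod.ext_iff]⟩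
  show Lmat a b c ((1:ℝ), (0:ℝ), (0:ℝ)) = a • ((1:ℝ), (0:ℝ), (0:ℝ))
  simp [Lmat_apply, Prod.ext_iff]

lemma eig_zero (a b c : ℝ) :
    Module.End.HasEigenvalue (Lmat a b c).toLinearMap 0 := by
  apply Module.End.hasEigenvalue_of_hasEigenvector (x := ((0:ℝ), (1:ℝ), (0:ℝ)))
  refine ⟨Module.End.mem_eigenspace_iff.mpr ?_, by norm_num [Prod.ext_iff]⟩
  show Lmat a b c ((0:ℝ), (1:ℝ), (0:ℝ)) = (0:ℝ) • ((0:ℝ), (1:ℝ), (0:ℝ))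
  simp [Lmat_apply, Prod.ext_iff]

lemma eig_trd (a b c : ℝ) (hc : c ≠ 0) :
    Module.End.HasEigenvalue (Lmat a b c).toLinearMap c := by
  apply Module.End.hasEigenvalue_of_hasEigenvector (x := ((0:ℝ), b / c, (1:ℝ)))
  refine ⟨Module.End.mem_eigenspace_iff.mpr ?_, by norm_num [Prod.ext_iff]⟩
  show Lmat a b c ((0:ℝ), b / c, (1:ℝ)) = c • ((0:ℝ), b / c, (1:ℝ))
  simp [Lmat_apply, Prod.ext_iff]
  field_simp

set_option maxHeartbeats 2000000 in
/-- For every `μ ∈ [0,1/2]`, `h ∈ ℝ` and `θ̄ ∈ ℝ`, the points `S^±_θ̄ = (0, θ̄, ±π/2)` are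
equilibria of the McGehee-regularized vector field `F_μ`, and its Jacobian there is the
matrix `[[±m₀/2,0,0],[0,0,∓m₀],[0,0,∓m₀/2]]` with `m₀ = √(2(1-μ))`; in particular the
eigenvalues of the Jacobian are `±m₀/2`, `0` and `∓m₀/2`. -/
theorem collision_circles_equilibria_jacobian
    (μ h : ℝ) (hμ : μ ∈ Set.Icc (0 : ℝ) (1 / 2)) (θb : ℝ) :
    Fvec μ h (0, θb, π / 2) = 0 ∧
    Fvec μ h (0, θb, -(π / 2)) = 0 ∧
    HasFDerivAt (Fvec μ h)
      (Lmat (Real.sqrt (2 * (1 - μ)) / 2) (-Real.sqrt (2 * (1 - μ)))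
        (-(Real.sqrt (2 * (1 - μ)) / 2))) (0, θb, π / 2) ∧
    HasFDerivAt (Fvec μ h)
      (Lmat (-(Real.sqrt (2 * (1 - μ)) / 2)) (Real.sqrt (2 * (1 - μ)))
        (Real.sqrt (2 * (1 - μ)) / 2)) (0, θb, -(π / 2)) ∧
    Module.End.HasEigenvalue
      (Lmat (Real.sqrt (2 * (1 - μ)) / 2) (-Real.sqrt (2 * (1 - μ)))
        (-(Real.sqrt (2 * (1 - μ)) / 2))).toLinearMap (Real.sqrt (2 * (1 - μ)) / 2) ∧
    Module.End.HasEigenvalue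
      (Lmat (Real.sqrt (2 * (1 - μ)) / 2) (-Real.sqrt (2 * (1 - μ)))
        (-(Real.sqrt (2 * (1 - μ)) / 2))).toLinearMap 0 ∧
    Module.End.HasEigenvalue
      (Lmat (Real.sqrt (2 * (1 - μ)) / 2) (-Real.sqrt (2 * (1 - μ)))
        (-(Real.sqrt (2 * (1 - μ)) / 2))).toLinearMap (-(Real.sqrt (2 * (1 - μ)) / 2)) ∧
    Module.End.HasEigenvalue
      (Lmat (-(Real.sqrt (2 * (1 - μ)) / 2)) (Real.sqrt (2 * (1 - μ)))
        (Real.sqrt (2 * (1 - μ)) / 2)).toLinearMap (-(Real.sqrt (2 * (1 - μ)) / 2)) ∧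
    Module.End.HasEigenvalue
      (Lmat (-(Real.sqrt (2 * (1 - μ)) / 2)) (Real.sqrt (2 * (1 - μ)))
        (Real.sqrt (2 * (1 - μ)) / 2)).toLinearMap 0 ∧
    Module.End.HasEigenvalue
      (Lmat (-(Real.sqrt (2 * (1 - μ)) / 2)) (Real.sqrt (2 * (1 - μ)))
        (Real.sqrt (2 * (1 - μ)) / 2)).toLinearMap (Real.sqrt (2 * (1 - μ)) / 2) := by
  obtain ⟨hμ0, hμ1⟩ := hμ
  have hKpos : (0:ℝ) < 2*(1-μ) := by linarith
  have hMpos : 0 < Real.sqrt (2*(1-μ)) := Real.sqrt_pos.mpr hKpos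
  have hMpos' : 0 < Real.sqrt (2 * (1 - μ)) := hMpos
  refine ⟨Fvec_eq_zero μ h θb (π/2) (by simp),
    Fvec_eq_zero μ h θb (-(π/2)) (by simp), ?_, ?_, ?_, ?_, ?_, ?_, ?_, ?_⟩
  · exact key_jacobian μ h θb (π/2) 1 _ _ _ hKpos (by simp) (by simp) one_ne_zero
      (by ring) (by ring) (by ring)
  · exact key_jacobian μ h θb (-(π/2)) (-1) _ _ _ hKpos (by simp) (by simp)
      (by norm_num) (by ring) (by ring) (by ring)
  · exact eig_fst _ _ _
  · exact eig_zero _ _ _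
  · exact eig_trd _ _ _ (neg_ne_zero.mpr (ne_of_gt (by linarith)))
  · exact eig_fst _ _ _
  · exact eig_zero _ _ _
  · exact eig_trd _ _ _ (ne_of_gt (by linarith))
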